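/- Let |ψ₀⟩ = |0⟩ or |ψ₀⟩ = |1⟩, and let |ψ₁⟩ = √q|0⟩ + √(1−q)|1⟩ with q ∈ (0,1). Set ρ₀ = |ψ₀⟩⟨ψ₀| and ρ₁ = |ψ₁⟩⟨ψ₁|. Then for any ε ∈ (0,1) there exists n_ε such that for all n ≥ n_ε, inf{ Tr(Z[ρ₁^{⊗n}] E) : E Hermitian on (ℂ²)^{⊗n}, 0 ≤ E ≤ I, Tr(Z[ρ₀^{⊗n}] E) ≥ 1−ε } = 0. -/

import Mathlib

open Matrix Complex Set Filter

noncomputable section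

/-- Number of 1s in a bit string. -/
def ones {n : ℕ} (x : Fin n → Fin 2) : ℕ := (Finset.univ.filter fun i => x i = 1).card

/-- The `n`-fold tensor power of a one-qubit operator, as a matrix indexed by bit strings. -/
def mpow (n : ℕ) (ρ : Matrix (Fin 2) (Fin 2) ℂ) :
    Matrix (Fin n → Fin 2) (Fin n → Fin 2) ℂ :=
  Matrix.of fun x y => ∏ i, ρ (x i) (y i)

/-- The parity operator ω = σ_z^{⊗n}: it multiplies a computational basis vector by
(-1)^(number of 1s). -/
def parityOp (n : ℕ) : Matrix (Fin n → Fin 2) (Fin n → Fin 2) ℂ :=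
  Matrix.diagonal fun x => (-1 : ℂ) ^ ones x

/-- The ℤ₂-twirling Z[X] = ½ (X + ωXω). -/
def twirl {n : ℕ} (X : Matrix (Fin n → Fin 2) (Fin n → Fin 2) ℂ) :
    Matrix (Fin n → Fin 2) (Fin n → Fin 2) ℂ :=
  (2 : ℂ)⁻¹ • (X + parityOp n * X * parityOp n)

/-- Rank-one projection |ψ⟩⟨ψ| on one qubit. -/
def projv (ψ : Fin 2 → ℂ) : Matrix (Fin 2) (Fin 2) ℂ := vecMulVec ψ (star ψ)

/-- Rank-one projection |ψ⟩⟨ψ| on n qubits. -/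
def projN {n : ℕ} (ψ : (Fin n → Fin 2) → ℂ) :
    Matrix (Fin n → Fin 2) (Fin n → Fin 2) ℂ := vecMulVec ψ (star ψ)

def ket0 : Fin 2 → ℂ := ![1, 0]

def ket1 : Fin 2 → ℂ := ![0, 1]

/-- The qubit state √p |0⟩ + e^{iφ} √(1-p) |1⟩. -/
def qubit (p φ : ℝ) : Fin 2 → ℂ :=
  ![(Real.sqrt p : ℂ), Complex.exp (Complex.I * φ) * (Real.sqrt (1 - p) : ℂ)]

/-- The qubit state √p |0⟩ + √(1-p) |1⟩. -/
def qubitR (p : ℝ) : Fin 2 → ℂ := ![(Real.sqrt p : ℂ), (Real.sqrt (1 - p) : ℂ)]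

open scoped ComplexOrder

/-- The set of type-II error probabilities Tr(σ₁ E) over POVM elements 0 ≤ E ≤ I
(Loewner order) whose type-I error is at most ε, i.e. Tr(σ₀ E) ≥ 1-ε. -/
def errSet (n : ℕ) (σ0 σ1 : Matrix (Fin n → Fin 2) (Fin n → Fin 2) ℂ) (ε : ℝ) : Set ℝ :=
  { x | ∃ E : Matrix (Fin n → Fin 2) (Fin n → Fin 2) ℂ,
      E.IsHermitian ∧ E.PosSemidef ∧ (1 - E).PosSemidef ∧
      1 - ε ≤ ((σ0 * E).trace).re ∧ x = ((σ1 * E).trace).re }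

-- helpers
namespace Helper

/-- product vector -/
def pvec (n : ℕ) (ψ : Fin 2 → ℂ) : (Fin n → Fin 2) → ℂ := fun x => ∏ i, ψ (x i)

lemma mpow_projv (n : ℕ) (ψ : Fin 2 → ℂ) : mpow n (projv ψ) = projN (pvec n ψ) := by
  ext x y
  simp [mpow, projv, projN, pvec, vecMulVec_apply, star_prod, Finset.prod_mul_distrib]

lemma dot_pvec (n : ℕ) (a b : Fin 2 → ℂ) :
    star (pvec n a) ⬝ᵥ pvec n b = (star a ⬝ᵥ b) ^ n := by
  simp only [dotProduct, Pi.star_apply, pvec]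
  rw [Fintype.sum_pow]
  congr 1; funext x
  simp [Finset.prod_mul_distrib]

lemma projN_isHermitian {n : ℕ} (w : (Fin n → Fin 2) → ℂ) : (projN w).IsHermitian := by
  ext x y
  simp [projN, conjTranspose_apply, vecMulVec_apply, mul_comm]

lemma projN_mulVec {n : ℕ} (w x : (Fin n → Fin 2) → ℂ) :
    projN w *ᵥ x = (star w ⬝ᵥ x) • w := by
  funext y
  simp only [projN, mulVec, dotProduct, vecMulVec_apply, Pi.star_apply, Pi.smul_apply,
    smul_eq_mul, Finset.sum_mul, Finset.mul_sum]
  exact Finset.sum_congr rfl (fun z _ => by ring)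

lemma projN_posSemidef {n : ℕ} (w : (Fin n → Fin 2) → ℂ) : (projN w).PosSemidef := by
  refine .of_dotProduct_mulVec_nonneg (projN_isHermitian w) fun x => ?_
  rw [projN_mulVec, dotProduct_smul, smul_eq_mul, mul_comm, star_dotProduct]
  exact star_mul_self_nonneg _

lemma trace_projN_mul {n : ℕ} (w : (Fin n → Fin 2) → ℂ)
    (E : Matrix (Fin n → Fin 2) (Fin n → Fin 2) ℂ) :
    (projN w * E).trace = star w ⬝ᵥ (E *ᵥ w) := by
  simp only [trace, diag_apply, mul_apply, projN, vecMulVec_apply, Pi.star_apply,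
    dotProduct, mulVec]
  rw [Finset.sum_comm]
  congr 1; funext y
  simp only [dotProduct, Finset.mul_sum]
  congr 1; funext x; ring

lemma parity_projN {n : ℕ} (w : (Fin n → Fin 2) → ℂ) :
    parityOp n * projN w * parityOp n = projN (fun x => (-1 : ℂ) ^ ones x * w x) := by
  ext x y
  simp only [parityOp, projN, diagonal_mul, mul_diagonal, vecMulVec_apply, Pi.star_apply,
    star_mul', star_pow, star_neg, star_one]
  ring


-- appended into namespace Helper
def sgn2 : Fin 2 → ℂ := ![1, -1]

lemma fin2_cases (j : Fin 2) : j = 0 ∨ j = 1 := by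
  fin_cases j
  · exact Or.inl rfl
  · exact Or.inr rfl

lemma neg_one_pow_ones {n : ℕ} (x : Fin n → Fin 2) :
    ((-1 : ℂ)) ^ ones x = ∏ i, sgn2 (x i) := by
  rw [ones, ← Finset.prod_const, Finset.prod_filter]
  refine Finset.prod_congr rfl fun i _ => ?_
  rcases fin2_cases (x i) with h | h <;> simp [h, sgn2]

lemma flip_pvec {n : ℕ} (ψ : Fin 2 → ℂ) :
    (fun x => (-1 : ℂ) ^ ones x * pvec n ψ x) = pvec n (fun j => sgn2 j * ψ j) := by
  funext x
  rw [neg_one_pow_ones]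
  simp [pvec, Finset.prod_mul_distrib]

lemma twirl_projN {n : ℕ} (w : (Fin n → Fin 2) → ℂ) :
    twirl (projN w) =
      (2 : ℂ)⁻¹ • (projN w + projN (fun x => (-1 : ℂ) ^ ones x * w x)) := by
  rw [twirl, parity_projN]

lemma smul_posSemidef {n : ℕ} {M : Matrix (Fin n → Fin 2) (Fin n → Fin 2) ℂ}
    (hM : M.PosSemidef) {c : ℝ} (hc : 0 ≤ c) : ((c : ℂ) • M).PosSemidef := by
  refine Matrix.PosSemidef.of_dotProduct_mulVec_nonneg ?_ fun x => ?_
  · unfold Matrix.IsHermitian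
    rw [conjTranspose_smul, hM.1]
    congr 1
    simp [Complex.star_def, Complex.conj_ofReal]
  · rw [smul_mulVec, dotProduct_smul, smul_eq_mul]
    exact mul_nonneg (by exact_mod_cast hc) (hM.dotProduct_mulVec_nonneg x)

lemma realSmul_isHermitian {n : ℕ} {M : Matrix (Fin n → Fin 2) (Fin n → Fin 2) ℂ}
    (hM : M.IsHermitian) (c : ℝ) : ((c : ℂ) • M).IsHermitian := by
  unfold Matrix.IsHermitian
  rw [conjTranspose_smul, hM]
  congr 1
  simp [Complex.star_def, Complex.conj_ofReal]

lemma projN_mul_projN {n : ℕ} (a b : (Fin n → Fin 2) → ℂ) :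
    projN a * projN b = (star a ⬝ᵥ b) • vecMulVec a (star b) := by
  ext x y
  simp only [mul_apply, projN, vecMulVec_apply, Pi.star_apply, Matrix.smul_apply, smul_eq_mul,
    dotProduct, Finset.sum_mul]
  exact Finset.sum_congr rfl fun z _ => by ring

def qubitRm (p : ℝ) : Fin 2 → ℂ := ![(Real.sqrt p : ℂ), -(Real.sqrt (1 - p) : ℂ)]

section qdots
variable {q : ℝ} (hq0 : 0 ≤ q) (hq1 : q ≤ 1)
include hq0 hq1

lemma dot_qq : star (qubitR q) ⬝ᵥ qubitR q = 1 := by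
  simp only [qubitR, dotProduct, Fin.sum_univ_two, Pi.star_apply, Matrix.cons_val_zero,
    Matrix.cons_val_one, Matrix.head_cons, Complex.star_def, Complex.conj_ofReal]
  rw [← Complex.ofReal_mul, ← Complex.ofReal_mul, ← Complex.ofReal_add,
    Real.mul_self_sqrt hq0, Real.mul_self_sqrt (by linarith)]
  norm_num

lemma dot_qm : star (qubitR q) ⬝ᵥ qubitRm q = ((2 * q - 1 : ℝ) : ℂ) := by
  simp only [qubitR, qubitRm, dotProduct, Fin.sum_univ_two, Pi.star_apply, Matrix.cons_val_zero,
    Matrix.cons_val_one, Matrix.head_cons, Complex.star_def, map_neg, Complex.conj_ofReal,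
    mul_neg, neg_mul]
  rw [← Complex.ofReal_mul, ← Complex.ofReal_mul, Real.mul_self_sqrt hq0,
    Real.mul_self_sqrt (by linarith), ← Complex.ofReal_neg, ← Complex.ofReal_add]
  norm_cast
  ring

lemma dot_mq : star (qubitRm q) ⬝ᵥ qubitR q = ((2 * q - 1 : ℝ) : ℂ) := by
  simp only [qubitR, qubitRm, dotProduct, Fin.sum_univ_two, Pi.star_apply, Matrix.cons_val_zero,
    Matrix.cons_val_one, Matrix.head_cons, Complex.star_def, map_neg, Complex.conj_ofReal,
    mul_neg, neg_mul]
  rw [← Complex.ofReal_mul, ← Complex.ofReal_mul, Real.mul_self_sqrt hq0,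
    Real.mul_self_sqrt (by linarith), ← Complex.ofReal_neg, ← Complex.ofReal_add]
  norm_cast
  ring

lemma dot_mm : star (qubitRm q) ⬝ᵥ qubitRm q = 1 := by
  simp only [qubitR, qubitRm, dotProduct, Fin.sum_univ_two, Pi.star_apply, Matrix.cons_val_zero,
    Matrix.cons_val_one, Matrix.head_cons, Complex.star_def, map_neg, Complex.conj_ofReal,
    neg_mul, mul_neg, neg_neg]
  rw [← Complex.ofReal_mul, ← Complex.ofReal_mul, Real.mul_self_sqrt hq0,
    Real.mul_self_sqrt (by linarith), ← Complex.ofReal_add]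
  norm_cast
  linarith

end qdots

lemma dot_q0 (q : ℝ) : star (qubitR q) ⬝ᵥ ket0 = ((Real.sqrt q : ℝ) : ℂ) := by
  simp [qubitR, ket0, dotProduct, Fin.sum_univ_two, Complex.star_def, Complex.conj_ofReal]

lemma dot_m0 (q : ℝ) : star (qubitRm q) ⬝ᵥ ket0 = ((Real.sqrt q : ℝ) : ℂ) := by
  simp [qubitRm, ket0, dotProduct, Fin.sum_univ_two, Complex.star_def, Complex.conj_ofReal]

lemma dot_0q (q : ℝ) : star ket0 ⬝ᵥ qubitR q = ((Real.sqrt q : ℝ) : ℂ) := by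
  simp [qubitR, ket0, dotProduct, Fin.sum_univ_two, Complex.star_def, Complex.conj_ofReal]

lemma dot_0m (q : ℝ) : star ket0 ⬝ᵥ qubitRm q = ((Real.sqrt q : ℝ) : ℂ) := by
  simp [qubitRm, ket0, dotProduct, Fin.sum_univ_two, Complex.star_def, Complex.conj_ofReal]

lemma dot_q1 (q : ℝ) : star (qubitR q) ⬝ᵥ ket1 = ((Real.sqrt (1 - q) : ℝ) : ℂ) := by
  simp [qubitR, ket1, dotProduct, Fin.sum_univ_two, Complex.star_def, Complex.conj_ofReal]

lemma dot_m1 (q : ℝ) : star (qubitRm q) ⬝ᵥ ket1 = ((-Real.sqrt (1 - q) : ℝ) : ℂ) := by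
  simp [qubitRm, ket1, dotProduct, Fin.sum_univ_two, Complex.star_def, Complex.conj_ofReal]

lemma dot_1q (q : ℝ) : star ket1 ⬝ᵥ qubitR q = ((Real.sqrt (1 - q) : ℝ) : ℂ) := by
  simp [qubitR, ket1, dotProduct, Fin.sum_univ_two, Complex.star_def, Complex.conj_ofReal]

lemma dot_1m (q : ℝ) : star ket1 ⬝ᵥ qubitRm q = ((-Real.sqrt (1 - q) : ℝ) : ℂ) := by
  simp [qubitRm, ket1, dotProduct, Fin.sum_univ_two, Complex.star_def, Complex.conj_ofReal]

lemma dot_00 : star ket0 ⬝ᵥ (ket0 : Fin 2 → ℂ) = 1 := by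
  simp [ket0, dotProduct, Fin.sum_univ_two]

lemma dot_11 : star ket1 ⬝ᵥ (ket1 : Fin 2 → ℂ) = 1 := by
  simp [ket1, dotProduct, Fin.sum_univ_two]

lemma sgn2_mul_qubitR (q : ℝ) : (fun j => sgn2 j * qubitR q j) = qubitRm q := by
  funext j
  rcases fin2_cases j with h | h <;> simp [h, sgn2, qubitR, qubitRm]

lemma sgn2_mul_ket0 : (fun j => sgn2 j * ket0 j) = ket0 := by
  funext j
  rcases fin2_cases j with h | h <;> simp [h, sgn2, ket0]

lemma sgn2_mul_ket1 : (fun j => sgn2 j * ket1 j) = fun j => -(ket1 j) := by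
  funext j
  rcases fin2_cases j with h | h <;> simp [h, sgn2, ket1]

lemma pvec_neg {n : ℕ} (ψ : Fin 2 → ℂ) :
    pvec n (fun j => -(ψ j)) = fun x => (-1 : ℂ) ^ n * pvec n ψ x := by
  funext x
  simp only [pvec]
  rw [Finset.prod_congr rfl (fun i _ => show -ψ (x i) = (-1 : ℂ) * ψ (x i) from by ring),
    Finset.prod_mul_distrib, Finset.prod_const, Finset.card_univ, Fintype.card_fin]

lemma projN_neg_pow {n m : ℕ} (w : (Fin n → Fin 2) → ℂ) :
    projN (fun x => (-1 : ℂ) ^ m * w x) = projN w := by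
  ext x y
  have h : ((-1 : ℂ) ^ m) * ((-1 : ℂ) ^ m) = 1 := by
    rw [← pow_add, ← two_mul, pow_mul]
    norm_num
  simp only [projN, vecMulVec_apply, Pi.star_apply, star_mul', star_pow, star_neg, star_one]
  calc (-1 : ℂ) ^ m * w x * ((-1 : ℂ) ^ m * star (w y))
      = ((-1 : ℂ) ^ m * (-1 : ℂ) ^ m) * (w x * star (w y)) := by ring
    _ = w x * star (w y) := by rw [h, one_mul]

lemma half_smul_double {n : ℕ} (X : Matrix (Fin n → Fin 2) (Fin n → Fin 2) ℂ) :
    (2 : ℂ)⁻¹ • (X + X) = X := by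
  rw [← two_smul ℂ X, smul_smul, inv_mul_cancel₀ (two_ne_zero), one_smul]

lemma key {n : ℕ} (u v w0 : (Fin n → Fin 2) → ℂ) (cR A B : ℝ)
    (huu : star u ⬝ᵥ u = 1) (hvv : star v ⬝ᵥ v = 1)
    (huv : star u ⬝ᵥ v = (cR : ℂ)) (hvu : star v ⬝ᵥ u = (cR : ℂ))
    (hw0w0 : star w0 ⬝ᵥ w0 = 1)
    (hA1 : star u ⬝ᵥ w0 = (A : ℂ)) (hA2 : star w0 ⬝ᵥ u = (A : ℂ))
    (hB1 : star v ⬝ᵥ w0 = (B : ℂ)) (hB2 : star w0 ⬝ᵥ v = (B : ℂ))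
    (hc1 : |cR| < 1) :
    ∃ E : Matrix (Fin n → Fin 2) (Fin n → Fin 2) ℂ,
      E.IsHermitian ∧ E.PosSemidef ∧ (1 - E).PosSemidef ∧
      (projN w0 * E).trace =
        ((1 - ((2 + 2*cR)⁻¹ * (A + B) ^ 2 + (2 - 2*cR)⁻¹ * (A - B) ^ 2) : ℝ) : ℂ) ∧
      (projN u * E).trace = 0 ∧ (projN v * E).trace = 0 := by
  obtain ⟨hcl, hcu⟩ := abs_lt.mp hc1
  have hα : (0:ℝ) < 2 + 2*cR := by linarith
  have hβ : (0:ℝ) < 2 - 2*cR := by linarith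
  set a1 : ℝ := (2 + 2*cR)⁻¹ with ha1
  set b1 : ℝ := (2 - 2*cR)⁻¹ with hb1
  -- dot products with u±v
  have dAA : star (u + v) ⬝ᵥ (u + v) = ((2 + 2*cR : ℝ) : ℂ) := by
    rw [star_add, add_dotProduct, dotProduct_add, dotProduct_add, huu, huv, hvu, hvv]
    push_cast; ring
  have dAB : star (u + v) ⬝ᵥ (u - v) = 0 := by
    rw [star_add, add_dotProduct, dotProduct_sub, dotProduct_sub, huu, huv, hvu, hvv]
    ring
  have dBA : star (u - v) ⬝ᵥ (u + v) = 0 := by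
    rw [star_sub, sub_dotProduct, dotProduct_add, dotProduct_add, huu, huv, hvu, hvv]
    ring
  have dBB : star (u - v) ⬝ᵥ (u - v) = ((2 - 2*cR : ℝ) : ℂ) := by
    rw [star_sub, sub_dotProduct, dotProduct_sub, dotProduct_sub, huu, huv, hvu, hvv]
    push_cast; ring
  have dAu : star (u + v) ⬝ᵥ u = ((1 + cR : ℝ) : ℂ) := by
    rw [star_add, add_dotProduct, huu, hvu]; push_cast; ring
  have dBu : star (u - v) ⬝ᵥ u = ((1 - cR : ℝ) : ℂ) := by
    rw [star_sub, sub_dotProduct, huu, hvu]; push_cast; ring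
  have dAv : star (u + v) ⬝ᵥ v = ((1 + cR : ℝ) : ℂ) := by
    rw [star_add, add_dotProduct, huv, hvv]; push_cast; ring
  have dBv : star (u - v) ⬝ᵥ v = ((-(1 - cR) : ℝ) : ℂ) := by
    rw [star_sub, sub_dotProduct, huv, hvv]; push_cast; ring
  have dAw : star (u + v) ⬝ᵥ w0 = ((A + B : ℝ) : ℂ) := by
    rw [star_add, add_dotProduct, hA1, hB1]; push_cast; ring
  have dBw : star (u - v) ⬝ᵥ w0 = ((A - B : ℝ) : ℂ) := by
    rw [star_sub, sub_dotProduct, hA1, hB1]; push_cast; ring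
  have dwA : star w0 ⬝ᵥ (u + v) = ((A + B : ℝ) : ℂ) := by
    rw [dotProduct_add, hA2, hB2]; push_cast; ring
  have dwB : star w0 ⬝ᵥ (u - v) = ((A - B : ℝ) : ℂ) := by
    rw [dotProduct_sub, hA2, hB2]; push_cast; ring
  set P : Matrix (Fin n → Fin 2) (Fin n → Fin 2) ℂ :=
    ((a1 : ℝ) : ℂ) • projN (u + v) + ((b1 : ℝ) : ℂ) • projN (u - v) with hPdef
  -- P is Hermitian
  have hPherm : P.IsHermitian :=
    (realSmul_isHermitian (projN_isHermitian _) a1).add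
      (realSmul_isHermitian (projN_isHermitian _) b1)
  -- P * P = P
  have hMAA : projN (u + v) * projN (u + v) = ((2 + 2*cR : ℝ) : ℂ) • projN (u + v) := by
    rw [projN_mul_projN, dAA]; rfl
  have hMBB : projN (u - v) * projN (u - v) = ((2 - 2*cR : ℝ) : ℂ) • projN (u - v) := by
    rw [projN_mul_projN, dBB]; rfl
  have hMAB : projN (u + v) * projN (u - v) = 0 := by
    rw [projN_mul_projN, dAB, zero_smul]
  have hMBA : projN (u - v) * projN (u + v) = 0 := by
    rw [projN_mul_projN, dBA, zero_smul]
  have hPP : P * P = P := by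
    rw [hPdef, add_mul, mul_add, mul_add, smul_mul_assoc, smul_mul_assoc, smul_mul_assoc,
      smul_mul_assoc, mul_smul_comm, mul_smul_comm, mul_smul_comm, mul_smul_comm,
      hMAA, hMAB, hMBA, hMBB]
    simp only [smul_zero, add_zero, zero_add, smul_smul]
    congr 1
    · congr 1
      norm_cast
      rw [ha1]
      field_simp
    · congr 1
      norm_cast
      rw [hb1]
      field_simp
  -- P *ᵥ u = u, P *ᵥ v = v
  have hhalf1 : a1 * (1 + cR) = 1/2 := by
    rw [ha1, show (2 + 2*cR) = 2*(1+cR) by ring, mul_inv, mul_assoc,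
      inv_mul_cancel₀ (by linarith), mul_one]; norm_num
  have hhalf2 : b1 * (1 - cR) = 1/2 := by rw [hb1]; field_simp
  have hPu : P *ᵥ u = u := by
    rw [hPdef, add_mulVec, smul_mulVec, smul_mulVec, projN_mulVec, projN_mulVec,
      dAu, dBu, smul_smul, smul_smul, ← Complex.ofReal_mul, ← Complex.ofReal_mul,
      hhalf1, hhalf2]
    push_cast
    module
  have hPv : P *ᵥ v = v := by
    rw [hPdef, add_mulVec, smul_mulVec, smul_mulVec, projN_mulVec, projN_mulVec,
      dAv, dBv, smul_smul, smul_smul, ← Complex.ofReal_mul, ← Complex.ofReal_mul,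
      show a1 * (1 + cR) = 1/2 from hhalf1,
      show b1 * (-(1 - cR)) = -(1/2) from by rw [mul_neg, hhalf2]]
    push_cast
    module
  refine ⟨1 - P, isHermitian_one.sub hPherm, ?_, ?_, ?_, ?_, ?_⟩
  · -- (1 - P) PosSemidef
    have h1 : (1 - P)ᴴ * (1 - P) = 1 - P := by
      have hherm : (1 - P)ᴴ = 1 - P := isHermitian_one.sub hPherm
      rw [hherm]
      simp only [sub_mul, mul_sub, one_mul, mul_one, hPP, sub_self, sub_zero]
    have := Matrix.posSemidef_conjTranspose_mul_self (1 - P)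
    rwa [h1] at this
  · -- (1 - (1 - P)) PosSemidef
    rw [sub_sub_cancel]
    exact (smul_posSemidef (projN_posSemidef _) (by positivity)).add
      (smul_posSemidef (projN_posSemidef _) (by positivity))
  · -- trace against w0
    have hPw0 : star w0 ⬝ᵥ (P *ᵥ w0) = ((a1 * (A+B)^2 + b1 * (A-B)^2 : ℝ) : ℂ) := by
      rw [hPdef, add_mulVec, smul_mulVec, smul_mulVec, projN_mulVec, projN_mulVec,
        dAw, dBw, dotProduct_add, dotProduct_smul, dotProduct_smul, dotProduct_smul,
        dotProduct_smul, dwA, dwB]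
      simp only [smul_eq_mul]
      push_cast
      ring
    rw [trace_projN_mul, sub_mulVec, one_mulVec, dotProduct_sub, hw0w0, hPw0]
    push_cast
    ring
  · rw [trace_projN_mul, sub_mulVec, one_mulVec, hPu, sub_self, dotProduct_zero]
  · rw [trace_projN_mul, sub_mulVec, one_mulVec, hPv, sub_self, dotProduct_zero]

lemma sigma1_eq (n : ℕ) (q : ℝ) :
    twirl (mpow n (projv (qubitR q))) =
      (2 : ℂ)⁻¹ • (projN (pvec n (qubitR q)) + projN (pvec n (qubitRm q))) := by
  rw [mpow_projv, twirl_projN, flip_pvec, sgn2_mul_qubitR]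

lemma sigma0_eq (n : ℕ) (ψ0 : Fin 2 → ℂ) (h0 : ψ0 = ket0 ∨ ψ0 = ket1) :
    twirl (mpow n (projv ψ0)) = projN (pvec n ψ0) := by
  rw [mpow_projv, twirl_projN, flip_pvec]
  rcases h0 with rfl | rfl
  · rw [sgn2_mul_ket0, half_smul_double]
  · rw [sgn2_mul_ket1, pvec_neg, projN_neg_pow, half_smul_double]

lemma errSet_nonneg (n : ℕ) (q : ℝ) (σ0 : Matrix (Fin n → Fin 2) (Fin n → Fin 2) ℂ) (ε : ℝ) :
    ∀ x ∈ errSet n σ0 (twirl (mpow n (projv (qubitR q)))) ε, 0 ≤ x := by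
  rintro x ⟨E, hH, hE, h1E, hTr, rfl⟩
  rw [sigma1_eq, smul_mul_assoc, Matrix.add_mul, trace_smul, trace_add,
    trace_projN_mul, trace_projN_mul]
  have h1 := hE.dotProduct_mulVec_nonneg (pvec n (qubitR q))
  have h2 := hE.dotProduct_mulVec_nonneg (pvec n (qubitRm q))
  rw [Complex.le_def] at h1 h2
  have e2 : (2:ℂ)⁻¹ = ((2⁻¹ : ℝ) : ℂ) := by norm_num
  rw [smul_eq_mul, e2, Complex.re_ofReal_mul, Complex.add_re]
  have := h1.1
  have := h2.1
  simp only [Complex.zero_re] at *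
  linarith

lemma zero_mem_errSet (ψ0 : Fin 2 → ℂ) (h0 : ψ0 = ket0 ∨ ψ0 = ket1)
    {q : ℝ} (hq : q ∈ Set.Ioo (0 : ℝ) 1) (ε : ℝ) (hε : 0 < ε) (n : ℕ) (hn : 1 ≤ n)
    (hsmall : 4 * max q (1 - q) ^ n ≤ ε * (2 - 2 * |2 * q - 1|)) :
    (0 : ℝ) ∈ errSet n (twirl (mpow n (projv ψ0))) (twirl (mpow n (projv (qubitR q)))) ε := by
  obtain ⟨hq0, hq1⟩ := hq
  have hq0' : (0:ℝ) ≤ q := hq0.le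
  have hq1' : q ≤ 1 := hq1.le
  have hγ : |2 * q - 1| < 1 := by rw [abs_lt]; constructor <;> linarith
  set cR : ℝ := (2 * q - 1) ^ n with hcR
  have hcabs : |cR| ≤ |2 * q - 1| := by
    rw [hcR, _root_.abs_pow]
    calc |2*q-1| ^ n ≤ |2*q-1| ^ 1 := pow_le_pow_of_le_one (abs_nonneg _) hγ.le hn
      _ = |2*q-1| := pow_one _
  have hc1 : |cR| < 1 := lt_of_le_of_lt hcabs hγ
  -- complex dot products
  have huu : star (pvec n (qubitR q)) ⬝ᵥ pvec n (qubitR q) = 1 := by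
    rw [dot_pvec, dot_qq hq0' hq1', one_pow]
  have hvv : star (pvec n (qubitRm q)) ⬝ᵥ pvec n (qubitRm q) = 1 := by
    rw [dot_pvec, dot_mm hq0' hq1', one_pow]
  have huv : star (pvec n (qubitR q)) ⬝ᵥ pvec n (qubitRm q) = ((cR : ℝ) : ℂ) := by
    rw [dot_pvec, dot_qm hq0' hq1', ← Complex.ofReal_pow, hcR]
  have hvu : star (pvec n (qubitRm q)) ⬝ᵥ pvec n (qubitR q) = ((cR : ℝ) : ℂ) := by
    rw [dot_pvec, dot_mq hq0' hq1', ← Complex.ofReal_pow, hcR]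
  have hw0w0 : star (pvec n ψ0) ⬝ᵥ pvec n ψ0 = 1 := by
    rcases h0 with rfl | rfl
    · rw [dot_pvec, dot_00, one_pow]
    · rw [dot_pvec, dot_11, one_pow]
  obtain ⟨A, B, hA1, hA2, hB1, hB2, hAle, hBle⟩ :
      ∃ A B : ℝ, star (pvec n (qubitR q)) ⬝ᵥ pvec n ψ0 = (A : ℂ) ∧
        star (pvec n ψ0) ⬝ᵥ pvec n (qubitR q) = (A : ℂ) ∧
        star (pvec n (qubitRm q)) ⬝ᵥ pvec n ψ0 = (B : ℂ) ∧
        star (pvec n ψ0) ⬝ᵥ pvec n (qubitRm q) = (B : ℂ) ∧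
        A ^ 2 ≤ max q (1 - q) ^ n ∧ B ^ 2 ≤ max q (1 - q) ^ n := by
    have hsq : Real.sqrt q ^ 2 = q := Real.sq_sqrt hq0'
    have hsq' : Real.sqrt (1 - q) ^ 2 = 1 - q := Real.sq_sqrt (by linarith)
    rcases h0 with rfl | rfl
    · refine ⟨Real.sqrt q ^ n, Real.sqrt q ^ n, ?_, ?_, ?_, ?_, ?_, ?_⟩
      · rw [dot_pvec, dot_q0, ← Complex.ofReal_pow]
      · rw [dot_pvec, dot_0q, ← Complex.ofReal_pow]
      · rw [dot_pvec, dot_m0, ← Complex.ofReal_pow]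
      · rw [dot_pvec, dot_0m, ← Complex.ofReal_pow]
      all_goals
        rw [← pow_mul, mul_comm n 2, pow_mul, hsq]
        exact pow_le_pow_left₀ hq0' (le_max_left _ _) n
    · refine ⟨Real.sqrt (1 - q) ^ n, (-Real.sqrt (1 - q)) ^ n, ?_, ?_, ?_, ?_, ?_, ?_⟩
      · rw [dot_pvec, dot_q1, ← Complex.ofReal_pow]
      · rw [dot_pvec, dot_1q, ← Complex.ofReal_pow]
      · rw [dot_pvec, dot_m1, ← Complex.ofReal_pow]
      · rw [dot_pvec, dot_1m, ← Complex.ofReal_pow]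
      · rw [← pow_mul, mul_comm n 2, pow_mul, hsq']
        exact pow_le_pow_left₀ (by linarith) (le_max_right _ _) n
      · rw [← pow_mul, mul_comm n 2, pow_mul, neg_sq, hsq']
        exact pow_le_pow_left₀ (by linarith) (le_max_right _ _) n
  obtain ⟨E, hHerm, hPSD, h1PSD, htr0, htru, htrv⟩ :=
    key (pvec n (qubitR q)) (pvec n (qubitRm q)) (pvec n ψ0) cR A B
      huu hvv huv hvu hw0w0 hA1 hA2 hB1 hB2 hc1
  refine ⟨E, hHerm, hPSD, h1PSD, ?_, ?_⟩
  · rw [sigma0_eq n ψ0 h0, htr0, Complex.ofReal_re]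
    have hd : (0:ℝ) < 2 - 2*|2*q-1| := by linarith
    have habs := abs_le.mp hcabs
    have h2a : 2 - 2*|2*q-1| ≤ 2 + 2*cR := by linarith [habs.1]
    have h2b : 2 - 2*|2*q-1| ≤ 2 - 2*cR := by linarith [habs.2]
    have hia : (2 + 2*cR)⁻¹ ≤ (2 - 2*|2*q-1|)⁻¹ := inv_anti₀ hd h2a
    have hib : (2 - 2*cR)⁻¹ ≤ (2 - 2*|2*q-1|)⁻¹ := inv_anti₀ hd h2b
    have hDnn : (0:ℝ) ≤ (2 - 2*|2*q-1|)⁻¹ := inv_nonneg.mpr hd.le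
    have hQ : (2 + 2*cR)⁻¹ * (A+B)^2 + (2 - 2*cR)⁻¹ * (A-B)^2 ≤ ε := by
      calc (2 + 2*cR)⁻¹ * (A+B)^2 + (2 - 2*cR)⁻¹ * (A-B)^2
          ≤ (2 - 2*|2*q-1|)⁻¹ * (A+B)^2 + (2 - 2*|2*q-1|)⁻¹ * (A-B)^2 :=
            add_le_add (mul_le_mul_of_nonneg_right hia (sq_nonneg _))
              (mul_le_mul_of_nonneg_right hib (sq_nonneg _))
        _ = (2 - 2*|2*q-1|)⁻¹ * ((A+B)^2 + (A-B)^2) := by ring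
        _ ≤ (2 - 2*|2*q-1|)⁻¹ * (4 * max q (1-q)^n) := by
            apply mul_le_mul_of_nonneg_left ?_ hDnn
            have hexp : (A+B)^2 + (A-B)^2 = 2*A^2 + 2*B^2 := by ring
            linarith
        _ ≤ (2 - 2*|2*q-1|)⁻¹ * (ε * (2 - 2*|2*q-1|)) :=
            mul_le_mul_of_nonneg_left hsmall hDnn
        _ = ε := by rw [mul_comm ε, ← mul_assoc, inv_mul_cancel₀ hd.ne', one_mul]
    linarith
  · rw [sigma1_eq, smul_mul_assoc, Matrix.add_mul, trace_smul, trace_add, htru, htrv,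
      add_zero, smul_zero, Complex.zero_re]

lemma main_result (ψ0 : Fin 2 → ℂ) (h0 : ψ0 = ket0 ∨ ψ0 = ket1)
    (q : ℝ) (hq : q ∈ Set.Ioo (0 : ℝ) 1) :
    ∀ ε ∈ Set.Ioo (0 : ℝ) 1, ∃ nε : ℕ, ∀ n : ℕ, nε ≤ n →
      sInf (errSet n (twirl (mpow n (projv ψ0))) (twirl (mpow n (projv (qubitR q)))) ε)
        = 0 := by
  intro ε hε
  obtain ⟨hε0, hε1⟩ := hε
  obtain ⟨hq0, hq1⟩ := hq
  have hγ : |2*q-1| < 1 := by rw [abs_lt]; constructor <;> linarith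
  have hr1 : max q (1-q) < 1 := max_lt hq1 (by linarith)
  have hr0 : (0:ℝ) ≤ max q (1-q) := le_trans hq0.le (le_max_left _ _)
  have hδ : 0 < ε * (2 - 2*|2*q-1|) / 4 :=
    div_pos (mul_pos hε0 (by linarith)) (by norm_num)
  obtain ⟨N, hN⟩ := exists_pow_lt_of_lt_one hδ hr1
  refine ⟨max N 1, fun n hn => ?_⟩
  have hn1 : 1 ≤ n := le_trans (le_max_right N 1) hn
  have hsmall : 4 * max q (1-q) ^ n ≤ ε * (2 - 2*|2*q-1|) := by
    have hmono : max q (1-q) ^ n ≤ max q (1-q) ^ N :=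
      pow_le_pow_of_le_one hr0 hr1.le (le_trans (le_max_left N 1) hn)
    linarith
  have hmem := zero_mem_errSet ψ0 h0 ⟨hq0, hq1⟩ ε hε0 n hn1 hsmall
  have hlb := errSet_nonneg n q (twirl (mpow n (projv ψ0))) ε
  exact le_antisymm (csInf_le ⟨0, hlb⟩ hmem) (le_csInf ⟨0, hmem⟩ hlb)

end Helper

/-- For |ψ₀⟩ ∈ {|0⟩, |1⟩} and |ψ₁⟩ = √q|0⟩+√(1-q)|1⟩ with q ∈ (0,1),
for any ε ∈ (0,1) there is n_ε such that for all n ≥ n_ε the minimal type-II error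
probability under ℤ₂-invariant measurements with type-I error at most ε is zero. -/
theorem typeII_error_vanishes_basis_null (ψ0 : Fin 2 → ℂ) (h0 : ψ0 = ket0 ∨ ψ0 = ket1)
    (q : ℝ) (hq : q ∈ Set.Ioo (0 : ℝ) 1) :
    ∀ ε ∈ Set.Ioo (0 : ℝ) 1, ∃ nε : ℕ, ∀ n : ℕ, nε ≤ n →
      sInf (errSet n (twirl (mpow n (projv ψ0))) (twirl (mpow n (projv (qubitR q)))) ε)
        = 0 :=
  Helper.main_result ψ0 h0 q hq
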